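/- Let ℓ ≥ 3 be a prime, k an algebraically closed field of characteristic ℓ, G a finite group, and ρ : G → GL₂(k) a monomial representation: there exist two one-dimensional subspaces L₁, L₂ of k² with k² = L₁ ⊕ L₂ such that every ρ(g) permutes the pair {L₁, L₂}. Let H be a subgroup of G such that the restriction of ρ to H is irreducible on k². Then for every nonzero irreducible G-subrepresentation N of ad⁰ρ, there exists σ ∈ H whose order is prime to ℓ, such that ρ(σ) is regular semisimple and the subspace of N fixed by σ is nonzero, i.e. there is a nonzero A ∈ N with ρ(σ)·A = A·ρ(σ). -/

import Mathlib

open Polynomial Matrix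

/-- An element of `GL₂(k)` is regular semisimple if it has two distinct eigenvalues,
i.e. its characteristic polynomial has two distinct roots. -/
def IsRegularSemisimple {k : Type} [Field k] (A : Matrix (Fin 2) (Fin 2) k) : Prop :=
  ∃ a b : k, a ≠ b ∧ A.charpoly = (X - C a) * (X - C b)

/-- Let `ℓ ≥ 3` be a prime, `k` an algebraically closed field of
characteristic `ℓ`, `G` a finite group and `ρ : G → GL₂(k)` a monomial representation
(there are one-dimensional subspaces `L₁, L₂` with `k² = L₁ ⊕ L₂` permuted by every
`ρ(g)`).  Let `H ≤ G` be a subgroup such that `ρ|_H` is irreducible. Then for every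
nonzero irreducible `G`-subrepresentation `N` of `ad⁰ρ` (trace-zero matrices with the
conjugation action) there is `σ ∈ H` of order prime to `ℓ` such that `ρ(σ)` is regular
semisimple and the `σ`-fixed subspace of `N` is nonzero. -/

lemma charpoly_fin_two' {k : Type} [Field k] (M : Matrix (Fin 2) (Fin 2) k) :
    M.charpoly = X ^ 2 - C M.trace * X + C M.det := by
  rw [Matrix.charpoly, Matrix.det_fin_two, Matrix.trace_fin_two, Matrix.det_fin_two]
  simp [charmatrix_apply_eq, charmatrix_apply_ne]
  ring

lemma charpoly_of_trace_det {k : Type} [Field k] (M : Matrix (Fin 2) (Fin 2) k) (a b : k)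
    (htr : M.trace = a + b) (hdet : M.det = a * b) :
    M.charpoly = (X - C a) * (X - C b) := by
  rw [charpoly_fin_two', htr, hdet]
  simp only [C_add, C_mul]
  ring

lemma trace_pow_eq {k : Type} [Field k] (M : Matrix (Fin 2) (Fin 2) k) (a b : k)
    (htr : M.trace = a + b) (hdet : M.det = a * b) :
    ∀ m : ℕ, (M ^ m).trace = a ^ m + b ^ m := by
  have hch := M.aeval_self_charpoly
  rw [charpoly_fin_two'] at hch
  simp only [map_add, map_sub, _root_.map_mul, map_pow, aeval_X, aeval_C,
    Algebra.algebraMap_eq_smul_one, htr, hdet] at hch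
  have hM2 : M * M = (a + b) • M - (a * b) • 1 := by
    have e1 : (a • (1 : Matrix (Fin 2) (Fin 2) k) + b • 1) * M = (a + b) • M := by
      rw [add_mul, smul_mul_assoc, smul_mul_assoc, one_mul, add_smul]
    have e2 : (a • (1 : Matrix (Fin 2) (Fin 2) k)) * (b • 1) = (a * b) • 1 := by
      rw [smul_mul_assoc, mul_smul_comm, smul_smul, one_mul]
    rw [e1, e2, sub_add, sub_eq_zero] at hch
    rw [← pow_two]; exact hch
  intro m
  induction m using Nat.twoStepInduction with
  | zero => simp [Matrix.trace_one]; norm_num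
  | one => simp [htr]
  | more n ih1 ih2 =>
    have : M ^ (n + 2) = (a + b) • M ^ (n + 1) - (a * b) • M ^ n := by
      calc M ^ (n + 2) = M ^ n * (M * M) := by rw [pow_succ, pow_succ, mul_assoc]
      _ = M ^ n * ((a + b) • M - (a * b) • 1) := by rw [hM2]
      _ = (a + b) • M ^ (n + 1) - (a * b) • M ^ n := by
          rw [mul_sub, mul_smul_comm, mul_smul_comm, mul_one, ← pow_succ]
    rw [this, Matrix.trace_sub, Matrix.trace_smul, Matrix.trace_smul, ih1, ih2]
    simp only [smul_eq_mul]
    ring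

lemma final_step {ℓ : ℕ} (hℓ : ℓ.Prime)
    {k : Type} [Field k] [CharP k ℓ] {G : Type} [Group G] [Finite G]
    (ρ : G →* Matrix.GeneralLinearGroup (Fin 2) k) (H : Subgroup G)
    (N : Submodule k (Matrix (Fin 2) (Fin 2) k))
    (σ₀ : G) (hσ₀ : σ₀ ∈ H) (a b : k) (hab : a ≠ b)
    (htr : (ρ σ₀ : Matrix (Fin 2) (Fin 2) k).trace = a + b)
    (hdet : (ρ σ₀ : Matrix (Fin 2) (Fin 2) k).det = a * b)
    (A : Matrix (Fin 2) (Fin 2) k) (hA : A ∈ N) (hA0 : A ≠ 0)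
    (hcomm : (ρ σ₀ : Matrix (Fin 2) (Fin 2) k) * A = A * (ρ σ₀ : Matrix (Fin 2) (Fin 2) k)) :
    ∃ σ ∈ H, (orderOf σ).Coprime ℓ ∧
      IsRegularSemisimple (ρ σ : Matrix (Fin 2) (Fin 2) k) ∧
      ∃ A ∈ N, A ≠ 0 ∧
        (ρ σ : Matrix (Fin 2) (Fin 2) k) * A = A * (ρ σ : Matrix (Fin 2) (Fin 2) k) := by
  have hn : orderOf σ₀ ≠ 0 := (orderOf_pos σ₀).ne'
  set v := (orderOf σ₀).factorization ℓ with hv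
  set m := ℓ ^ v with hm
  have hpow : (ρ (σ₀ ^ m) : Matrix (Fin 2) (Fin 2) k)
      = (ρ σ₀ : Matrix (Fin 2) (Fin 2) k) ^ m := by
    rw [map_pow]; exact Units.val_pow_eq_pow_val _ _
  have : Fact (Nat.Prime ℓ) := ⟨hℓ⟩
  have hfrob : (a : k) ^ m ≠ b ^ m := by
    intro h
    apply hab
    have h2 : (a - b) ^ m = 0 := by rw [sub_pow_char_pow, h, sub_self]
    rw [sub_eq_zero.mp (pow_eq_zero_iff (pow_ne_zero v hℓ.ne_zero) |>.mp h2)]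
  refine ⟨σ₀ ^ m, pow_mem hσ₀ m, ?_, ?_, A, hA, hA0, ?_⟩
  · rw [orderOf_pow, Nat.gcd_eq_right (Nat.ordProj_dvd (orderOf σ₀) ℓ)]
    exact (Nat.coprime_ordCompl hℓ hn).symm
  · exact ⟨a ^ m, b ^ m, hfrob,
      charpoly_of_trace_det _ _ _ (by rw [hpow]; exact trace_pow_eq _ a b htr hdet m)
        (by rw [hpow, Matrix.det_pow, hdet, mul_pow])⟩
  · rw [hpow]; exact (Commute.pow_left hcomm m)

set_option maxHeartbeats 4000000 in
theorem exists_regular_semisimple_fixing_line_of_monomial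
    (ℓ : ℕ) (hℓ : ℓ.Prime) (hℓ3 : 3 ≤ ℓ)
    (k : Type) [Field k] [IsAlgClosed k] [CharP k ℓ]
    (G : Type) [Group G] [Finite G]
    (ρ : G →* Matrix.GeneralLinearGroup (Fin 2) k)
    -- `ρ` is monomial
    (L₁ L₂ : Submodule k (Fin 2 → k))
    (hL₁ : Module.finrank k L₁ = 1) (hL₂ : Module.finrank k L₂ = 1)
    (hcompl : IsCompl L₁ L₂)
    (hperm : ∀ g : G,
      (L₁.map (Matrix.mulVecLin (ρ g : Matrix (Fin 2) (Fin 2) k)) = L₁ ∧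
        L₂.map (Matrix.mulVecLin (ρ g : Matrix (Fin 2) (Fin 2) k)) = L₂) ∨
      (L₁.map (Matrix.mulVecLin (ρ g : Matrix (Fin 2) (Fin 2) k)) = L₂ ∧
        L₂.map (Matrix.mulVecLin (ρ g : Matrix (Fin 2) (Fin 2) k)) = L₁))
    -- `ρ|_H` is irreducible
    (H : Subgroup G)
    (hH : ∀ W : Submodule k (Fin 2 → k),
      (∀ g ∈ H, ∀ x ∈ W, (ρ g : Matrix (Fin 2) (Fin 2) k).mulVec x ∈ W) → W = ⊥ ∨ W = ⊤)
    -- a nonzero irreducible subrepresentation `N` of `ad⁰ρ`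
    (N : Submodule k (Matrix (Fin 2) (Fin 2) k))
    (hNtr : N ≤ LinearMap.ker (Matrix.traceLinearMap (Fin 2) k k))
    (hNstab : ∀ g : G, ∀ A ∈ N,
      (ρ g : Matrix (Fin 2) (Fin 2) k) * A * ((ρ g)⁻¹ : Matrix (Fin 2) (Fin 2) k) ∈ N)
    (hNne : N ≠ ⊥)
    (hNirr : ∀ N' : Submodule k (Matrix (Fin 2) (Fin 2) k), N' ≤ N →
      (∀ g : G, ∀ A ∈ N',
        (ρ g : Matrix (Fin 2) (Fin 2) k) * A * ((ρ g)⁻¹ : Matrix (Fin 2) (Fin 2) k) ∈ N') →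
      N' = ⊥ ∨ N' = N) :
    ∃ σ ∈ H, (orderOf σ).Coprime ℓ ∧
      IsRegularSemisimple (ρ σ : Matrix (Fin 2) (Fin 2) k) ∧
      ∃ A ∈ N, A ≠ 0 ∧
        (ρ σ : Matrix (Fin 2) (Fin 2) k) * A = A * (ρ σ : Matrix (Fin 2) (Fin 2) k) := by
  -- pick spanning vectors
  have hbot1 : L₁ ≠ ⊥ := by intro h; rw [h] at hL₁; simp at hL₁
  have hbot2 : L₂ ≠ ⊥ := by intro h; rw [h] at hL₂; simp at hL₂
  obtain ⟨v₁, hv₁L, hv₁0⟩ := Submodule.ne_bot_iff _ |>.mp hbot1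
  obtain ⟨v₂, hv₂L, hv₂0⟩ := Submodule.ne_bot_iff _ |>.mp hbot2
  have hsp1 : L₁ = Submodule.span k {v₁} := by
    refine (Submodule.eq_of_le_of_finrank_le ((Submodule.span_singleton_le_iff_mem _ _).mpr hv₁L) ?_).symm
    rw [hL₁, finrank_span_singleton hv₁0]
  have hsp2 : L₂ = Submodule.span k {v₂} := by
    refine (Submodule.eq_of_le_of_finrank_le ((Submodule.span_singleton_le_iff_mem _ _).mpr hv₂L) ?_).symm
    rw [hL₂, finrank_span_singleton hv₂0]
  -- linear independence
  have hli : LinearIndependent k ![v₁, v₂] := by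
    rw [LinearIndependent.pair_iff]
    intro s t hst
    have h1 : s • v₁ = -(t • v₂) := by
      rw [← add_eq_zero_iff_eq_neg]; exact hst
    have hmem : s • v₁ ∈ L₁ ⊓ L₂ := by
      constructor
      · exact Submodule.smul_mem _ _ hv₁L
      · rw [h1]; exact Submodule.neg_mem _ (Submodule.smul_mem _ _ hv₂L)
    rw [hcompl.inf_eq_bot] at hmem
    have hs : s = 0 := by
      by_contra hs
      exact hv₁0 (by simpa [hs] using congrArg (fun w => s⁻¹ • w) hmem)
    refine ⟨hs, ?_⟩
    rw [hs, zero_smul, zero_add] at hst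
    by_contra ht
    exact hv₂0 (by simpa [ht] using congrArg (fun w => t⁻¹ • w) hst)
  have hspan : Submodule.span k (Set.range ![v₁, v₂]) = ⊤ := by
    have hr : Set.range ![v₁, v₂] = {v₁, v₂} := by
      ext w; simp [Fin.exists_fin_two]; tauto
    rw [hr, Submodule.span_insert, ← hsp1, ← hsp2, hcompl.sup_eq_top]
  set B : Module.Basis (Fin 2) k (Fin 2 → k) := Module.Basis.mk hli hspan.ge with hB
  set E := B.equivFun with hE
  set P : Matrix (Fin 2) (Fin 2) k := LinearMap.toMatrix' (E.symm :
    (Fin 2 → k) →ₗ[k] (Fin 2 → k)) with hP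
  set Q : Matrix (Fin 2) (Fin 2) k := LinearMap.toMatrix' (E :
    (Fin 2 → k) →ₗ[k] (Fin 2 → k)) with hQ
  have hQP : Q * P = 1 := by
    rw [hP, hQ, ← LinearMap.toMatrix'_comp]
    have : (E : (Fin 2 → k) →ₗ[k] (Fin 2 → k)) ∘ₗ (E.symm :
        (Fin 2 → k) →ₗ[k] (Fin 2 → k)) = LinearMap.id := by
      ext x; simp
    rw [this, LinearMap.toMatrix'_id]
  have hPQ : P * Q = 1 := by
    rw [hP, hQ, ← LinearMap.toMatrix'_comp]
    have : (E.symm : (Fin 2 → k) →ₗ[k] (Fin 2 → k)) ∘ₗ (E :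
        (Fin 2 → k) →ₗ[k] (Fin 2 → k)) = LinearMap.id := by
      ext x; simp
    rw [this, LinearMap.toMatrix'_id]
  have hPapp : ∀ x : Fin 2 → k, P.mulVec x = x 0 • v₁ + x 1 • v₂ := by
    intro x
    rw [hP, ← Matrix.toLin'_apply, Matrix.toLin'_toMatrix']
    show E.symm x = _
    rw [hE, B.equivFun_symm_apply, Fin.sum_univ_two, hB, Module.Basis.coe_mk]
    simp
  -- chunk 2 : the conjugated representation matrices
  have hcol : ∀ (M : Matrix (Fin 2) (Fin 2) k) (x : Fin 2 → k) (i : Fin 2),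
      M.mulVec x i = M i 0 * x 0 + M i 1 * x 1 := by
    intro M x i; simp [Matrix.mulVec, dotProduct, Fin.sum_univ_two]
  set u0 : Fin 2 → k := ![1, 0] with hu0
  set u1 : Fin 2 → k := ![0, 1] with hu1
  have hPu0 : P.mulVec u0 = v₁ := by rw [hPapp]; simp [hu0]
  have hPu1 : P.mulVec u1 = v₂ := by rw [hPapp]; simp [hu1]
  have hQv₁ : Q.mulVec v₁ = u0 := by
    rw [← hPu0, Matrix.mulVec_mulVec, hQP, Matrix.one_mulVec]
  have hQv₂ : Q.mulVec v₂ = u1 := by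
    rw [← hPu1, Matrix.mulVec_mulVec, hQP, Matrix.one_mulVec]
  set R : G → Matrix (Fin 2) (Fin 2) k := fun g => Q * (ρ g : Matrix (Fin 2) (Fin 2) k) * P
    with hRdef
  have cancelPQ : ∀ X : Matrix (Fin 2) (Fin 2) k, P * (Q * X) = X := by
    intro X; rw [← mul_assoc, hPQ, one_mul]
  have cancelQP : ∀ X : Matrix (Fin 2) (Fin 2) k, Q * (P * X) = X := by
    intro X; rw [← mul_assoc, hQP, one_mul]
  have hRmul : ∀ g h : G, R (g * h) = R g * R h := by
    intro g h
    have hmm : ((ρ (g * h) : Matrix (Fin 2) (Fin 2) k)) =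
        (ρ g : Matrix (Fin 2) (Fin 2) k) * (ρ h : Matrix (Fin 2) (Fin 2) k) := by
      rw [_root_.map_mul]; rfl
    show Q * _ * P = (Q * _ * P) * (Q * _ * P)
    rw [hmm]
    simp only [mul_assoc, cancelPQ, cancelQP]
  have hRone : R 1 = 1 := by
    show Q * _ * P = 1
    rw [_root_.map_one]
    rw [show ((1 : Matrix.GeneralLinearGroup (Fin 2) k) : Matrix (Fin 2) (Fin 2) k) = 1 from rfl]
    rw [mul_one, hQP]
  have hRinv : ∀ g : G, R g * R g⁻¹ = 1 := by
    intro g; rw [← hRmul, mul_inv_cancel, hRone]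
  have hRinv' : ∀ g : G, R g⁻¹ * R g = 1 := by
    intro g; rw [← hRmul, inv_mul_cancel, hRone]
  have hrec : ∀ g : G, (ρ g : Matrix (Fin 2) (Fin 2) k) = P * R g * Q := by
    intro g
    show _ = P * (Q * _ * P) * Q
    simp only [mul_assoc, cancelPQ]
    rw [hPQ, mul_one]
  -- the coercion of the inverse
  have hcoeinv : ∀ g : G, ((ρ g)⁻¹ : Matrix (Fin 2) (Fin 2) k)
      = ((ρ g⁻¹ : Matrix.GeneralLinearGroup (Fin 2) k) : Matrix (Fin 2) (Fin 2) k) := by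
    intro g; rw [map_inv]; exact (Matrix.coe_units_inv _).symm
  -- pattern dichotomy
  have hpat : ∀ g : G, (R g 0 1 = 0 ∧ R g 1 0 = 0) ∨ (R g 0 0 = 0 ∧ R g 1 1 = 0) := by
    intro g
    have hcolR : ∀ (key : Fin 2 → k) (key2 : Fin 2 → k) (a : k),
        (ρ g : Matrix (Fin 2) (Fin 2) k).mulVec (P.mulVec key) = a • (P.mulVec key2) →
        (R g).mulVec key = a • key2 := by
      intro key key2 a hk
      rw [hRdef]
      show (Q * (ρ g : Matrix (Fin 2) (Fin 2) k) * P).mulVec key = _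
      rw [← Matrix.mulVec_mulVec, ← Matrix.mulVec_mulVec, hk, Matrix.mulVec_smul,
        Matrix.mulVec_mulVec, hQP, Matrix.one_mulVec]
    have hmem : ∀ (L : Submodule k (Fin 2 → k)) (v : Fin 2 → k), L = Submodule.span k {v} →
        (ρ g : Matrix (Fin 2) (Fin 2) k).mulVec v₁ ∈ L →
        ∃ a : k, (ρ g : Matrix (Fin 2) (Fin 2) k).mulVec v₁ = a • v := by
      intro L v hLv hm
      rw [hLv, Submodule.mem_span_singleton] at hm
      obtain ⟨a, ha⟩ := hm; exact ⟨a, ha.symm⟩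
    have hmem2 : ∀ (L : Submodule k (Fin 2 → k)) (v : Fin 2 → k), L = Submodule.span k {v} →
        (ρ g : Matrix (Fin 2) (Fin 2) k).mulVec v₂ ∈ L →
        ∃ a : k, (ρ g : Matrix (Fin 2) (Fin 2) k).mulVec v₂ = a • v := by
      intro L v hLv hm
      rw [hLv, Submodule.mem_span_singleton] at hm
      obtain ⟨a, ha⟩ := hm; exact ⟨a, ha.symm⟩
    rcases hperm g with ⟨h1, h2⟩ | ⟨h1, h2⟩
    · left
      have m1 : (ρ g : Matrix (Fin 2) (Fin 2) k).mulVec v₁ ∈ L₁ := by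
        rw [← h1]; exact Submodule.mem_map_of_mem hv₁L
      have m2 : (ρ g : Matrix (Fin 2) (Fin 2) k).mulVec v₂ ∈ L₂ := by
        rw [← h2]; exact Submodule.mem_map_of_mem hv₂L
      obtain ⟨a, ha⟩ := hmem L₁ v₁ hsp1 m1
      obtain ⟨d, hd⟩ := hmem2 L₂ v₂ hsp2 m2
      have c1 : (R g).mulVec u0 = a • u0 := hcolR u0 u0 a (by rw [hPu0, ha])
      have c2 : (R g).mulVec u1 = d • u1 := hcolR u1 u1 d (by rw [hPu1, hd])
      constructor
      · have h5 := congrFun c2 0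
        rw [hcol (R g) u1 0] at h5
        simpa [hu1] using h5
      · have h5 := congrFun c1 1
        rw [hcol (R g) u0 1] at h5
        simpa [hu0] using h5
    · right
      have m1 : (ρ g : Matrix (Fin 2) (Fin 2) k).mulVec v₁ ∈ L₂ := by
        rw [← h1]; exact Submodule.mem_map_of_mem hv₁L
      have m2 : (ρ g : Matrix (Fin 2) (Fin 2) k).mulVec v₂ ∈ L₁ := by
        rw [← h2]; exact Submodule.mem_map_of_mem hv₂L
      obtain ⟨a, ha⟩ := hmem L₂ v₂ hsp2 m1
      obtain ⟨d, hd⟩ := hmem2 L₁ v₁ hsp1 m2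
      have c1 : (R g).mulVec u0 = a • u1 := hcolR u0 u1 a (by rw [hPu0, hPu1, ha])
      have c2 : (R g).mulVec u1 = d • u0 := hcolR u1 u0 d (by rw [hPu1, hPu0, hd])
      constructor
      · have h5 := congrFun c1 0
        rw [hcol (R g) u0 0] at h5
        simpa [hu0, hu1] using h5
      · have h5 := congrFun c2 1
        rw [hcol (R g) u1 1] at h5
        simpa [hu0, hu1] using h5
  -- chunk 3
  have hmulentry : ∀ (M N' : Matrix (Fin 2) (Fin 2) k) (i j : Fin 2),
      (M * N') i j = M i 0 * N' 0 j + M i 1 * N' 1 j := by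
    intro M N' i j; simp [Matrix.mul_apply, Fin.sum_univ_two]
  have hinvdiag : ∀ g : G, R g 0 1 = 0 → R g 1 0 = 0 →
      R g⁻¹ 0 1 = 0 ∧ R g⁻¹ 1 0 = 0 ∧ R g 0 0 * R g⁻¹ 0 0 = 1 ∧ R g 1 1 * R g⁻¹ 1 1 = 1 := by
    intro g h01 h10
    have e00 := congrFun (congrFun (hRinv g) 0) 0
    have e11 := congrFun (congrFun (hRinv g) 1) 1
    have e01 := congrFun (congrFun (hRinv g) 0) 1
    have e10 := congrFun (congrFun (hRinv g) 1) 0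
    rw [hmulentry] at e00 e11 e01 e10
    simp [Matrix.one_apply, h01, h10] at e00 e11 e01 e10
    rcases hpat g⁻¹ with ⟨i01, i10⟩ | ⟨i00, i11⟩
    · refine ⟨i01, i10, ?_, ?_⟩
      · simpa [i10] using e00
      · simpa [i01] using e11
    · rw [i00] at e00
      simp at e00
  have hinvanti : ∀ g : G, R g 0 0 = 0 → R g 1 1 = 0 →
      R g⁻¹ 0 0 = 0 ∧ R g⁻¹ 1 1 = 0 ∧ R g 0 1 * R g⁻¹ 1 0 = 1 ∧ R g 1 0 * R g⁻¹ 0 1 = 1 := by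
    intro g h00 h11
    have e00 := congrFun (congrFun (hRinv g) 0) 0
    have e11 := congrFun (congrFun (hRinv g) 1) 1
    rw [hmulentry] at e00 e11
    simp [Matrix.one_apply, h00, h11] at e00 e11
    rcases hpat g⁻¹ with ⟨i01, i10⟩ | ⟨i00, i11⟩
    · rw [i10] at e00
      simp at e00
    · exact ⟨i00, i11, by simpa [i00] using e00, by simpa [i11] using e11⟩
  -- action of ρ through R on explicit vectors
  have hact : ∀ (g : G) (x : Fin 2 → k),
      (ρ g : Matrix (Fin 2) (Fin 2) k).mulVec (P.mulVec x) = P.mulVec ((R g).mulVec x) := by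
    intro g x
    rw [Matrix.mulVec_mulVec, Matrix.mulVec_mulVec, hrec g, mul_assoc (P * R g) Q P, hQP,
      mul_one]
  have hveq : ∀ (M : Matrix (Fin 2) (Fin 2) k) (x : Fin 2 → k) (y : Fin 2 → k),
      (M 0 0 * x 0 + M 0 1 * x 1 = y 0) → (M 1 0 * x 0 + M 1 1 * x 1 = y 1) →
      M.mulVec x = y := by
    intro M x y h0 h1
    funext i
    fin_cases i
    · rw [hcol]; exact h0
    · rw [hcol]; exact h1
  -- C1 : an anti-diagonal element of H
  have hC1 : ∃ τ ∈ H, R τ 0 0 = 0 ∧ R τ 1 1 = 0 := by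
    by_contra hno
    push_neg at hno
    have hdiag : ∀ h ∈ H, R h 0 1 = 0 ∧ R h 1 0 = 0 := by
      intro h hh
      rcases hpat h with h' | ⟨h00, h11⟩
      · exact h'
      · exact absurd h11 (hno h hh h00)
    have hstab : ∀ g ∈ H, ∀ x ∈ L₁, (ρ g : Matrix (Fin 2) (Fin 2) k).mulVec x ∈ L₁ := by
      intro g hg x hx
      rw [hsp1, Submodule.mem_span_singleton] at hx
      obtain ⟨c, rfl⟩ := hx
      rw [Matrix.mulVec_smul]
      refine Submodule.smul_mem _ _ ?_
      rw [← hPu0, hact]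
      have : (R g).mulVec u0 = (R g 0 0) • u0 := by
        refine hveq _ _ _ ?_ ?_ <;> simp [hu0, (hdiag g hg).2]
      rw [this, Matrix.mulVec_smul, hPu0]
      exact Submodule.smul_mem _ _ hv₁L
    rcases hH L₁ hstab with hb | ht
    · exact hv₁0 (by simpa [hb] using hv₁L)
    · have : v₂ ∈ L₁ ⊓ L₂ := ⟨by rw [ht]; trivial, hv₂L⟩
      rw [hcompl.inf_eq_bot] at this
      exact hv₂0 this
  obtain ⟨τ, hτH, hτ00, hτ11⟩ := hC1
  obtain ⟨hτi00, hτi11, hbC, hcB⟩ := hinvanti τ hτ00 hτ11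
  set b := R τ 0 1 with hbdef
  set c := R τ 1 0 with hcdef
  set Bb := R τ⁻¹ 0 1 with hBdef
  set Cc := R τ⁻¹ 1 0 with hCdef
  have hb0 : b ≠ 0 := fun h => by rw [h, zero_mul] at hbC; exact zero_ne_one hbC
  have hc0 : c ≠ 0 := fun h => by rw [h, zero_mul] at hcB; exact zero_ne_one hcB
  have hB0 : Bb ≠ 0 := fun h => by rw [h, mul_zero] at hcB; exact zero_ne_one hcB
  have hC0 : Cc ≠ 0 := fun h => by rw [h, mul_zero] at hbC; exact zero_ne_one hbC
  -- C2 : a diagonal element of H with distinct entries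
  have hC2 : ∃ δ ∈ H, (R δ 0 1 = 0 ∧ R δ 1 0 = 0) ∧ R δ 0 0 ≠ R δ 1 1 := by
    by_contra hno
    push_neg at hno
    obtain ⟨r, hr⟩ := IsAlgClosed.exists_pow_nat_eq (k := k) (b * c) (n := 2) (by norm_num)
    rw [pow_two] at hr
    have hr0 : r ≠ 0 := by
      intro h; rw [h, mul_zero] at hr; exact mul_ne_zero hb0 hc0 hr.symm
    set w : Fin 2 → k := P.mulVec ![b, r] with hwdef
    have hw0 : w ≠ 0 := by
      intro h
      rw [hwdef, hPapp] at h
      have := (LinearIndependent.pair_iff.mp hli (![b, r] 0) (![b, r] 1) h).1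
      simp at this
      exact hb0 this
    have hstab2 : ∀ g ∈ H, ∀ x ∈ Submodule.span k {w},
        (ρ g : Matrix (Fin 2) (Fin 2) k).mulVec x ∈ Submodule.span k {w} := by
      intro g hg x hx
      rw [Submodule.mem_span_singleton] at hx
      obtain ⟨t, rfl⟩ := hx
      rw [Matrix.mulVec_smul]
      refine Submodule.smul_mem _ _ ?_
      rw [hwdef, hact, Submodule.mem_span_singleton]
      rcases hpat g with ⟨h01, h10⟩ | ⟨h00, h11⟩
      · -- diagonal, hence scalar
        have hsc : R g 0 0 = R g 1 1 := hno g hg ⟨h01, h10⟩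
        refine ⟨R g 0 0, ?_⟩
        have hs : (R g).mulVec ![b, r] = R g 0 0 • ![b, r] := by
          refine hveq _ _ _ ?_ ?_
          · simp [h01]
          · simp [h10, hsc]
        rw [hs, Matrix.mulVec_smul]
      · -- anti-diagonal
        set b' := R g 0 1 with hb'def
        set c' := R g 1 0 with hc'def
        have hgτ : g * τ⁻¹ ∈ H := H.mul_mem hg (H.inv_mem hτH)
        have hRgτ : R (g * τ⁻¹) = R g * R τ⁻¹ := hRmul g τ⁻¹
        have hgτ01 : R (g * τ⁻¹) 0 1 = 0 := by
          rw [hRgτ, hmulentry, h00, hτi11]; ring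
        have hgτ10 : R (g * τ⁻¹) 1 0 = 0 := by
          rw [hRgτ, hmulentry, h11, hτi00]; ring
        have hsc := hno (g * τ⁻¹) hgτ ⟨hgτ01, hgτ10⟩
        rw [hRgτ, hmulentry, hmulentry, h00, h11, hτi00, hτi11] at hsc
        have key : b' * c = c' * b := by
          have h1 : b' * Cc = c' * Bb := by linear_combination hsc
          have hCb : Cc = b⁻¹ := by field_simp; linear_combination hbC
          have hBc : Bb = c⁻¹ := by field_simp; linear_combination hcB
          rw [hCb, hBc] at h1
          field_simp at h1
          linear_combination h1
        refine ⟨b' * r / b, ?_⟩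
        have hs : (R g).mulVec ![b, r] = (b' * r / b) • ![b, r] := by
          refine hveq _ _ _ ?_ ?_
          · simp [h00, ← hb'def]
            field_simp
          · simp [h11, ← hc'def]
            rw [div_mul_eq_mul_div, eq_comm, div_eq_iff hb0]
            linear_combination b' * hr + b * key
        rw [hs, Matrix.mulVec_smul]
    rcases hH (Submodule.span k {w}) hstab2 with hbb | htt
    · exact hw0 (by
        have : w ∈ Submodule.span k {w} := Submodule.mem_span_singleton_self w
        rwa [hbb, Submodule.mem_bot] at this)
    · have hv1w : v₁ ∈ Submodule.span k {w} := by rw [htt]; trivial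
      rw [Submodule.mem_span_singleton] at hv1w
      obtain ⟨t, ht⟩ := hv1w
      rw [hwdef, hPapp] at ht
      simp only [Matrix.cons_val_zero, Matrix.cons_val_one, Matrix.head_cons] at ht
      have hz : (t * b - 1) • v₁ + (t * r) • v₂ = 0 := by
        have hz1 : (t * b - 1) • v₁ + (t * r) • v₂ = t • (b • v₁ + r • v₂) - v₁ := by module
        rw [hz1, ht, sub_self]
      obtain ⟨h1, h2⟩ := LinearIndependent.pair_iff.mp hli _ _ hz
      have ht0 : t ≠ 0 := by
        intro h; rw [h] at h1; simp at h1
      exact hr0 (by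
        have := mul_eq_zero.mp h2
        tauto)
  -- ===== chunk 4 : main case analysis =====
  have h2k : (2 : k) ≠ 0 := by
    intro h
    have h2 : ((2 : ℕ) : k) = 0 := by exact_mod_cast h
    have hdvd := (CharP.cast_eq_zero_iff k ℓ 2).mp h2
    have := Nat.le_of_dvd (by norm_num) hdvd
    omega
  have htrans : ∀ g : G, (ρ g : Matrix (Fin 2) (Fin 2) k).trace = (R g).trace ∧
      (ρ g : Matrix (Fin 2) (Fin 2) k).det = (R g).det := by
    intro g
    constructor
    · rw [hrec g, Matrix.trace_mul_cycle, ← mul_assoc, hQP, one_mul]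
    · rw [hrec g, Matrix.det_mul, Matrix.det_mul]
      have hd : Q.det * P.det = 1 := by rw [← Matrix.det_mul, hQP, Matrix.det_one]
      linear_combination (R g).det * hd
  have hconj : ∀ (g : G) (A : Matrix (Fin 2) (Fin 2) k),
      Q * ((ρ g : Matrix (Fin 2) (Fin 2) k) * A * ((ρ g)⁻¹ : Matrix (Fin 2) (Fin 2) k)) * P
        = R g * (Q * A * P) * R g⁻¹ := by
    intro g A
    rw [hcoeinv g]
    show Q * (_ * A * _) * P = (Q * _ * P) * (Q * A * P) * (Q * _ * P)
    simp only [mul_assoc, cancelPQ]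
  have hcommtrans : ∀ (g : G) (A : Matrix (Fin 2) (Fin 2) k),
      R g * (Q * A * P) = (Q * A * P) * R g →
      (ρ g : Matrix (Fin 2) (Fin 2) k) * A = A * (ρ g : Matrix (Fin 2) (Fin 2) k) := by
    intro g A h
    rw [hrec g]
    calc P * R g * Q * A = P * (R g * (Q * A * P)) * Q := by
          simp only [mul_assoc, cancelPQ, hPQ, mul_one]
      _ = P * ((Q * A * P) * R g) * Q := by rw [h]
      _ = A * (P * R g * Q) := by simp only [mul_assoc, cancelPQ, hPQ, mul_one]
  have hcvt0 : ∀ A : Matrix (Fin 2) (Fin 2) k, Q * A * P = 0 → A = 0 := by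
    intro A h
    have h2 : P * (Q * A * P) * Q = 0 := by rw [h]; simp
    rw [show P * (Q * A * P) * Q = (P * Q) * A * (P * Q) by simp only [mul_assoc, cancelPQ],
      hPQ, one_mul, mul_one] at h2
    exact h2
  -- the submodule of matrices whose conjugate is anti-diagonal
  set ADc : Submodule k (Matrix (Fin 2) (Fin 2) k) :=
    { carrier := {A | (Q * A * P) 0 0 = 0 ∧ (Q * A * P) 1 1 = 0}
      add_mem' := by
        intro A B hA hB
        have e : ∀ i : Fin 2, (Q * (A + B) * P) i i = (Q * A * P) i i + (Q * B * P) i i := by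
          intro i; rw [mul_add, add_mul, Matrix.add_apply]
        exact ⟨by rw [e 0, hA.1, hB.1, add_zero], by rw [e 1, hA.2, hB.2, add_zero]⟩
      zero_mem' := by constructor <;> simp
      smul_mem' := by
        intro t A hA
        have e : ∀ i : Fin 2, (Q * (t • A) * P) i i = t * (Q * A * P) i i := by
          intro i; rw [Matrix.mul_smul, Matrix.smul_mul, Matrix.smul_apply, smul_eq_mul]
        exact ⟨by rw [e 0, hA.1, mul_zero], by rw [e 1, hA.2, mul_zero]⟩ } with hADc
  have hADmem : ∀ A : Matrix (Fin 2) (Fin 2) k,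
      A ∈ ADc ↔ (Q * A * P) 0 0 = 0 ∧ (Q * A * P) 1 1 = 0 := fun A => Iff.rfl
  have hNXstab : ∀ g : G, ∀ A ∈ N ⊓ ADc,
      (ρ g : Matrix (Fin 2) (Fin 2) k) * A * ((ρ g)⁻¹ : Matrix (Fin 2) (Fin 2) k) ∈ N ⊓ ADc := by
    intro g A hA
    rw [Submodule.mem_inf] at hA
    refine Submodule.mem_inf.mpr ⟨hNstab g A hA.1, (hADmem _).mpr ?_⟩
    rw [hconj g A]
    obtain ⟨ha00, ha11⟩ := (hADmem A).mp hA.2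
    set A' := Q * A * P with hA'def
    obtain ⟨hi1, hi2⟩ | ⟨hi1, hi2⟩ := hpat g
    · obtain ⟨hj1, hj2, -, -⟩ := hinvdiag g hi1 hi2
      constructor <;> (rw [hmulentry, hmulentry, hmulentry]; simp only [hi1, hi2, hj1, hj2, ha00, ha11]; ring)
    · obtain ⟨hj1, hj2, -, -⟩ := hinvanti g hi1 hi2
      constructor <;> (rw [hmulentry, hmulentry, hmulentry]; simp only [hi1, hi2, hj1, hj2, ha00, ha11]; ring)
  obtain ⟨δ, hδH, ⟨hδ01, hδ10⟩, hδne⟩ := hC2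
  obtain ⟨hδi01, hδi10, hss', htt'⟩ := hinvdiag δ hδ01 hδ10
  rcases hNirr (N ⊓ ADc) inf_le_left hNXstab with hX0 | hXN
  · -- every element of N is "diagonal"
    have hdiagN : ∀ A ∈ N, (Q * A * P) 0 1 = 0 ∧ (Q * A * P) 1 0 = 0 := by
      intro A hA
      have hmem : A - (ρ δ : Matrix (Fin 2) (Fin 2) k) * A *
          ((ρ δ)⁻¹ : Matrix (Fin 2) (Fin 2) k) ∈ N ⊓ ADc := by
        refine Submodule.mem_inf.mpr ⟨N.sub_mem hA (hNstab δ A hA), (hADmem _).mpr ?_⟩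
        have e : ∀ i j : Fin 2, (Q * (A - (ρ δ : Matrix (Fin 2) (Fin 2) k) * A *
            ((ρ δ)⁻¹ : Matrix (Fin 2) (Fin 2) k)) * P) i j
            = (Q * A * P) i j - (R δ * (Q * A * P) * R δ⁻¹) i j := by
          intro i j
          rw [mul_sub, sub_mul, Matrix.sub_apply, hconj δ A]
        set A' := Q * A * P with hA'def
        constructor
        · rw [e 0 0, hmulentry, hmulentry, hmulentry]; simp only [hδ01, hδ10, hδi01, hδi10]
          linear_combination (-(A' 0 0)) * hss'
        · rw [e 1 1, hmulentry, hmulentry, hmulentry]; simp only [hδ01, hδ10, hδi01, hδi10]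
          linear_combination (-(A' 1 1)) * htt'
      rw [hX0, Submodule.mem_bot, sub_eq_zero] at hmem
      have heq : Q * A * P = R δ * (Q * A * P) * R δ⁻¹ := by
        conv_lhs => rw [hmem]
        rw [hconj δ A]
      set A' := Q * A * P with hA'def
      have hst' : R δ 0 0 * R δ⁻¹ 1 1 ≠ 1 := by
        intro h
        apply hδne
        have h3 : R δ 0 0 * (R δ 1 1 * R δ⁻¹ 1 1) = R δ 1 1 * (R δ 0 0 * R δ⁻¹ 1 1) := by ring
        rw [htt', h, mul_one, mul_one] at h3
        exact h3
      have hts' : R δ 1 1 * R δ⁻¹ 0 0 ≠ 1 := by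
        intro h
        apply hδne
        have h3 : R δ 1 1 * (R δ 0 0 * R δ⁻¹ 0 0) = R δ 0 0 * (R δ 1 1 * R δ⁻¹ 0 0) := by ring
        rw [hss', h, mul_one, mul_one] at h3
        exact h3.symm
      constructor
      · have h01 := congrFun (congrFun heq 0) 1
        rw [hmulentry, hmulentry, hmulentry] at h01; simp only [hδ01, hδ10, hδi01, hδi10] at h01
        have h4 : A' 0 1 * (1 - R δ 0 0 * R δ⁻¹ 1 1) = 0 := by linear_combination h01
        rcases mul_eq_zero.mp h4 with h' | h'
        · exact h'
        · exact absurd (by linear_combination -h') hst'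
      · have h10 := congrFun (congrFun heq 1) 0
        rw [hmulentry, hmulentry, hmulentry] at h10; simp only [hδ01, hδ10, hδi01, hδi10] at h10
        have h4 : A' 1 0 * (1 - R δ 1 1 * R δ⁻¹ 0 0) = 0 := by linear_combination h10
        rcases mul_eq_zero.mp h4 with h' | h'
        · exact h'
        · exact absurd (by linear_combination -h') hts'
    obtain ⟨A₀, hA₀N, hA₀0⟩ := (Submodule.ne_bot_iff N).mp hNne
    obtain ⟨ha01, ha10⟩ := hdiagN A₀ hA₀N
    have hcommδ : (ρ δ : Matrix (Fin 2) (Fin 2) k) * A₀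
        = A₀ * (ρ δ : Matrix (Fin 2) (Fin 2) k) := by
      apply hcommtrans
      set A' := Q * A₀ * P with hA'def
      funext i j
      fin_cases i <;> fin_cases j <;> rw [hmulentry, hmulentry] <;>
        simp only [Fin.zero_eta, Fin.mk_one, hδ01, hδ10, ha01, ha10] <;> ring
    exact final_step hℓ ρ H N δ hδH (R δ 0 0) (R δ 1 1) hδne
      (by rw [(htrans δ).1, Matrix.trace_fin_two])
      (by rw [(htrans δ).2, Matrix.det_fin_two, hδ01, hδ10]; ring)
      A₀ hA₀N hA₀0 hcommδ
  · -- every element of N is "anti-diagonal"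
    have hantiN : ∀ A ∈ N, (Q * A * P) 0 0 = 0 ∧ (Q * A * P) 1 1 = 0 := by
      intro A hA
      have hAX : A ∈ N ⊓ ADc := by rw [hXN]; exact hA
      exact (hADmem A).mp (Submodule.mem_inf.mp hAX).2
    obtain ⟨A₀, hA₀N, hA₀0⟩ := (Submodule.ne_bot_iff N).mp hNne
    obtain ⟨ha00, ha11⟩ := hantiN A₀ hA₀N
    set A0' := Q * A₀ * P with hA0'def
    set x := A0' 0 1 with hxdef
    set y := A0' 1 0 with hydef
    have hxy : ¬(x = 0 ∧ y = 0) := by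
      rintro ⟨hx, hy⟩
      apply hA₀0
      apply hcvt0
      rw [← hA0'def]
      funext i j
      fin_cases i <;> fin_cases j
      · simpa using ha00
      · simpa using hx
      · simpa using hy
      · simpa using ha11
    -- the generic anti-diagonal argument
    have main_anti : ∀ σ₁ : G, σ₁ ∈ H → R σ₁ 0 0 = 0 → R σ₁ 1 1 = 0 →
        x + R σ₁ 0 1 * y * R σ₁⁻¹ 0 1 ≠ 0 →
        ∃ σ ∈ H, (orderOf σ).Coprime ℓ ∧
          IsRegularSemisimple (ρ σ : Matrix (Fin 2) (Fin 2) k) ∧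
          ∃ A ∈ N, A ≠ 0 ∧
            (ρ σ : Matrix (Fin 2) (Fin 2) k) * A = A * (ρ σ : Matrix (Fin 2) (Fin 2) k) := by
      intro σ₁ hσ₁H hσ00 hσ11 hne
      obtain ⟨hsi00, hsi11, hβC, hγB⟩ := hinvanti σ₁ hσ00 hσ11
      set β := R σ₁ 0 1 with hβdef
      set γ := R σ₁ 1 0 with hγdef
      set B₁ := R σ₁⁻¹ 0 1 with hB₁def
      set C₁ := R σ₁⁻¹ 1 0 with hC₁def
      set A₁ := A₀ + (ρ σ₁ : Matrix (Fin 2) (Fin 2) k) * A₀ *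
        ((ρ σ₁)⁻¹ : Matrix (Fin 2) (Fin 2) k) with hA₁def
      have hA₁N : A₁ ∈ N := N.add_mem hA₀N (hNstab σ₁ A₀ hA₀N)
      obtain ⟨hA₁00, hA₁11⟩ := hantiN A₁ hA₁N
      set A1' := Q * A₁ * P with hA1'def
      have hcA₁ : ∀ i j : Fin 2, A1' i j = A0' i j + (R σ₁ * A0' * R σ₁⁻¹) i j := by
        intro i j
        rw [hA1'def, hA₁def, mul_add, add_mul, Matrix.add_apply, hconj σ₁ A₀, ← hA0'def]
      have h01 : A1' 0 1 = x + β * y * B₁ := by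
        rw [hcA₁ 0 1, hmulentry, hmulentry, hmulentry]; simp only [hσ00, hσ11, ha00, ha11, hsi00, hsi11]
        ring
      have h10 : A1' 1 0 = y + γ * x * C₁ := by
        rw [hcA₁ 1 0, hmulentry, hmulentry, hmulentry]; simp only [hσ00, hσ11, ha00, ha11, hsi00, hsi11]
        ring
      have hA₁0 : A₁ ≠ 0 := by
        intro h
        apply hne
        rw [← h01, hA1'def, h]
        simp
      have hcomm : (ρ σ₁ : Matrix (Fin 2) (Fin 2) k) * A₁
          = A₁ * (ρ σ₁ : Matrix (Fin 2) (Fin 2) k) := by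
        apply hcommtrans
        rw [← hA1'def]
        funext i j
        fin_cases i <;> fin_cases j
        · rw [hmulentry, hmulentry]; simp only [Fin.zero_eta, Fin.mk_one, hσ00, hσ11, hA₁00, hA₁11, h01, h10]
          linear_combination γ * x * hβC - β * y * hγB
        · rw [hmulentry, hmulentry]; simp only [Fin.zero_eta, Fin.mk_one, hσ00, hσ11, hA₁00, hA₁11, h01, h10]
          ring
        · rw [hmulentry, hmulentry]; simp only [Fin.zero_eta, Fin.mk_one, hσ00, hσ11, hA₁00, hA₁11, h01, h10]
          ring
        · rw [hmulentry, hmulentry]; simp only [Fin.zero_eta, Fin.mk_one, hσ00, hσ11, hA₁00, hA₁11, h01, h10]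
          linear_combination β * y * hγB - γ * x * hβC
      have hβ0 : β ≠ 0 := fun h => by rw [h, zero_mul] at hβC; exact zero_ne_one hβC
      have hγ0 : γ ≠ 0 := fun h => by rw [h, zero_mul] at hγB; exact zero_ne_one hγB
      obtain ⟨r₁, hr₁⟩ := IsAlgClosed.exists_pow_nat_eq (k := k) (β * γ) (n := 2) (by norm_num)
      rw [pow_two] at hr₁
      have hr₁0 : r₁ ≠ 0 := by
        intro h; rw [h, mul_zero] at hr₁; exact mul_ne_zero hβ0 hγ0 hr₁.symm
      have hrne : r₁ ≠ -r₁ := by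
        intro h
        apply hr₁0
        have hh : 2 * r₁ = 0 := by linear_combination h
        rcases mul_eq_zero.mp hh with h' | h'
        · exact absurd h' h2k
        · exact h'
      exact final_step hℓ ρ H N σ₁ hσ₁H r₁ (-r₁) hrne
        (by rw [(htrans σ₁).1, Matrix.trace_fin_two, hσ00, hσ11]; ring)
        (by rw [(htrans σ₁).2, Matrix.det_fin_two, hσ00, hσ11, ← hβdef, ← hγdef]; linear_combination hr₁)
        A₁ hA₁N hA₁0 hcomm
    by_cases hcase : x + b * y * Bb ≠ 0
    · exact main_anti τ hτH hτ00 hτ11 hcase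
    · push_neg at hcase
      set σ₂ := δ * τ with hσ₂def
      have hσ₂H : σ₂ ∈ H := H.mul_mem hδH hτH
      have hRσ₂ : R σ₂ = R δ * R τ := hRmul δ τ
      have hσ₂00 : R σ₂ 0 0 = 0 := by rw [hRσ₂, hmulentry, hτ00, hδ01]; ring
      have hσ₂11 : R σ₂ 1 1 = 0 := by rw [hRσ₂, hmulentry, hτ11, hδ10]; ring
      have hσ₂01 : R σ₂ 0 1 = R δ 0 0 * b := by rw [hRσ₂, hmulentry, hδ01]; ring
      have hσ₂10 : R σ₂ 1 0 = R δ 1 1 * c := by rw [hRσ₂, hmulentry, hδ10]; ring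
      obtain ⟨hsi00, hsi11, hβC₂, hγB₂⟩ := hinvanti σ₂ hσ₂00 hσ₂11
      apply main_anti σ₂ hσ₂H hσ₂00 hσ₂11
      intro hzero
      rw [hσ₂01] at hzero
      set B₂ := R σ₂⁻¹ 0 1 with hB₂def
      rw [hσ₂10] at hγB₂
      have hy0 : y ≠ 0 := by
        intro h
        rw [h] at hcase
        have hx : x = 0 := by linear_combination hcase
        exact hxy ⟨hx, h⟩
      have hkey : R δ 0 0 * B₂ = Bb := by
        have h5 : b * y * (R δ 0 0 * B₂ - Bb) = 0 := by linear_combination hzero - hcase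
        rcases mul_eq_zero.mp h5 with h' | h'
        · rcases mul_eq_zero.mp h' with h'' | h''
          · exact absurd h'' hb0
          · exact absurd h'' hy0
        · linear_combination h'
      apply hδne
      have hcB₂0 : c * B₂ ≠ 0 := by
        intro h
        rw [show R δ 1 1 * c * B₂ = R δ 1 1 * (c * B₂) by ring, h, mul_zero] at hγB₂
        exact zero_ne_one hγB₂
      have h6 : R δ 0 0 * (c * B₂) = R δ 1 1 * (c * B₂) := by
        linear_combination c * hkey + hcB - hγB₂
      exact mul_right_cancel₀ hcB₂0 h6
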